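/- If f ∈ L¹(ℝⁿ) is compactly supported and its Fourier transform 𝓕f vanishes on a nonempty open subset of ℝⁿ, then f = 0 almost everywhere. -/

import Mathlib

noncomputable section
open MeasureTheory

open Complex Real FourierTransform Metric Filter

/-- smooth compactly supported maps are Schwartz -/
def toSchwartzAux {V : Type*} [NormedAddCommGroup V] [NormedSpace ℝ V]
    (g : V → ℂ) (hg : ContDiff ℝ ((⊤:ℕ∞)) g) (h : HasCompactSupport g) : SchwartzMap V ℂ where
  toFun := g
  smooth' := hg
  decay' := by
    intro k m
    obtain ⟨C, hC⟩ := (((continuous_norm.pow k)).mul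
      ((hg.continuous_iteratedFDeriv (mod_cast le_top)).norm)).bounded_above_of_compact_support
      (((h.iteratedFDeriv m).norm).mul_left)
    exact ⟨C, fun x => by simpa [_root_.abs_of_nonneg (by positivity : (0:ℝ) ≤ ‖x‖^k * ‖iteratedFDeriv ℝ m g x‖)] using hC x⟩


/-- The Fourier transform on `ℝⁿ`, `𝓕f(ζ) = ∫ e^{−i x·ζ} f(x) dx`. -/
def euclideanFourier {n : ℕ} (f : EuclideanSpace ℝ (Fin n) → ℂ)
    (ζ : EuclideanSpace ℝ (Fin n)) : ℂ :=
  ∫ x : EuclideanSpace ℝ (Fin n),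
    Complex.exp (-(Complex.I * ((inner ℝ x ζ : ℝ) : ℂ))) * f x

/-- if `f ∈ L¹(ℝⁿ)` is compactly supported and its Fourier transform vanishes
on a nonempty open subset of `ℝⁿ`, then `f = 0` almost everywhere. -/
theorem eq_zero_of_fourier_vanishes_on_open {n : ℕ}
    (f : EuclideanSpace ℝ (Fin n) → ℂ) (hf : Integrable f) (hsupp : HasCompactSupport f)
    (U : Set (EuclideanSpace ℝ (Fin n))) (hU : IsOpen U) (hne : U.Nonempty)
    (hvan : ∀ ζ ∈ U, euclideanFourier f ζ = 0) :
    f =ᵐ[volume] 0 := by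
  let V := EuclideanSpace ℝ (Fin n)
  -- support radius
  obtain ⟨R, hR0, hR⟩ : ∃ R : ℝ, 0 ≤ R ∧ ∀ x, x ∈ tsupport f → ‖x‖ ≤ R := by
    obtain ⟨R, hR⟩ := hsupp.isCompact.isBounded.subset_closedBall 0
    exact ⟨max R 0, le_max_right _ _, fun x hx => by
      exact (mem_closedBall_zero_iff.1 (hR hx)).trans (le_max_left _ _)⟩
  have hfx : ∀ x : V, ¬ ‖x‖ ≤ R → f x = 0 := fun x hx =>
    image_eq_zero_of_notMem_tsupport (fun h => hx (hR x h))
  -- Step A : the Fourier transform vanishes everywhere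
  have key : ∀ w : V, euclideanFourier f w = 0 := by
    obtain ⟨w₀, hw₀⟩ := hne
    obtain ⟨ε, εpos, hball⟩ := Metric.isOpen_iff.1 hU w₀ hw₀
    intro w
    set d : V := w - w₀ with hd
    set M : ℝ := R * ‖d‖ with hM
    have hM0 : 0 ≤ M := by positivity
    set c₀ : V → ℂ := fun x => -(Complex.I * ((inner ℝ x w₀ : ℝ) : ℂ)) with hc₀
    set c₁ : V → ℂ := fun x => -(Complex.I * ((inner ℝ x d : ℝ) : ℂ)) with hc₁
    set Φ : ℂ → ℂ := fun z => ∫ x : V, Complex.exp (c₀ x + z * c₁ x) * f x with hΦ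
    have hc₁norm : ∀ x : V, f x ≠ 0 → ‖c₁ x‖ ≤ M := by
      intro x hx
      have hxR : ‖x‖ ≤ R := hR x (subset_tsupport f (by simpa using hx))
      have : ‖c₁ x‖ = |(inner ℝ x d : ℝ)| := by
        simp [hc₁]
      rw [this]
      calc |(inner ℝ x d : ℝ)| ≤ ‖x‖ * ‖d‖ := abs_real_inner_le_norm x d
        _ ≤ R * ‖d‖ := by gcongr
    have hre : ∀ (x : V) (z : ℂ), (c₀ x + z * c₁ x).re ≤ ‖z‖ * ‖c₁ x‖ := by
      intro x z
      have h1 : (c₀ x).re = 0 := by simp [hc₀]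
      have : (c₀ x + z * c₁ x).re = (z * c₁ x).re := by simp [Complex.add_re, h1]
      rw [this]
      exact (Complex.re_le_norm _).trans (norm_mul _ _).le
    have hexp : ∀ (x : V) (z : ℂ) (B : ℝ), f x ≠ 0 → ‖z‖ ≤ B →
        ‖Complex.exp (c₀ x + z * c₁ x)‖ ≤ Real.exp (B * M) := by
      intro x z B hx hz
      rw [Complex.norm_exp]
      apply Real.exp_le_exp.2
      calc (c₀ x + z * c₁ x).re ≤ ‖z‖ * ‖c₁ x‖ := hre x z
        _ ≤ B * M := mul_le_mul hz (hc₁norm x hx) (norm_nonneg _)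
            (le_trans (norm_nonneg _) hz)
    have hcont : ∀ z : ℂ, Continuous fun x : V => Complex.exp (c₀ x + z * c₁ x) := by
      intro z
      apply Complex.continuous_exp.comp
      apply Continuous.add
      · exact (continuous_const.mul (Complex.continuous_ofReal.comp
          (continuous_id.inner continuous_const))).neg
      · exact continuous_const.mul ((continuous_const.mul (Complex.continuous_ofReal.comp
          (continuous_id.inner continuous_const))).neg)
    have hmeas : ∀ z : ℂ, AEStronglyMeasurable (fun x : V => Complex.exp (c₀ x + z * c₁ x) * f x) volume :=
      fun z => ((hcont z).aestronglyMeasurable).mul hf.1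
    have hFint : ∀ z : ℂ, Integrable (fun x : V => Complex.exp (c₀ x + z * c₁ x) * f x) := by
      intro z
      apply Integrable.mono' (hf.norm.const_mul (Real.exp (‖z‖ * M))) (hmeas z)
      filter_upwards with x
      by_cases hx : f x = 0
      · simp [hx]
      · rw [norm_mul]
        exact mul_le_mul_of_nonneg_right (hexp x z ‖z‖ hx le_rfl) (norm_nonneg _)
    have hdiff : Differentiable ℂ Φ := by
      intro z₀
      have := (hasDerivAt_integral_of_dominated_loc_of_deriv_le (μ := (volume : Measure V))
        (F := fun z x => Complex.exp (c₀ x + z * c₁ x) * f x)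
        (F' := fun z x => Complex.exp (c₀ x + z * c₁ x) * c₁ x * f x)
        (x₀ := z₀) (bound := fun x => Real.exp ((‖z₀‖ + 1) * M) * M * ‖f x‖)
        (Metric.ball_mem_nhds z₀ one_pos)
        (Filter.Eventually.of_forall fun z => hmeas z)
        (hFint z₀)
        ((((hcont z₀).mul (by
          exact (continuous_const.mul (Complex.continuous_ofReal.comp
            (continuous_id.inner continuous_const))).neg)).aestronglyMeasurable).mul hf.1)
        ?_ ((hf.norm.const_mul _)) ?_).2
      exact this.differentiableAt
      · filter_upwards with x z hz
        by_cases hx : f x = 0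
        · simp [hx]
        · have hzb : ‖z‖ ≤ ‖z₀‖ + 1 := by
            have := mem_ball_iff_norm.1 hz
            calc ‖z‖ ≤ ‖z₀‖ + ‖z - z₀‖ := by
                  simpa using norm_add_le (z₀) (z - z₀)
              _ ≤ ‖z₀‖ + 1 := by linarith
          rw [norm_mul, norm_mul]
          have h1 := hexp x z (‖z₀‖ + 1) hx hzb
          have h2 := hc₁norm x hx
          have := mul_le_mul h1 h2 (norm_nonneg _) (Real.exp_nonneg _)
          exact mul_le_mul_of_nonneg_right this (norm_nonneg _)
      · filter_upwards with x z hz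
        have h0 : HasDerivAt (fun z : ℂ => c₀ x + z * c₁ x) (c₁ x) z := by
          simpa using ((hasDerivAt_id z).mul_const (c₁ x)).const_add (c₀ x)
        exact (h0.cexp).mul_const (f x)
    have hΦan : AnalyticOnNhd ℂ Φ Set.univ := fun z _ => hdiff.analyticAt z
    have hreal : ∀ t : ℝ, Φ (t : ℂ) = euclideanFourier f (w₀ + t • d) := by
      intro t
      rw [hΦ, euclideanFourier]
      apply integral_congr_ae
      filter_upwards with x
      congr 1
      have hinner : (inner ℝ x (w₀ + t • d) : ℝ) = (inner ℝ x w₀ : ℝ) + t * (inner ℝ x d : ℝ) := by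
        rw [inner_add_right, real_inner_smul_right]
      rw [hinner, hc₀, hc₁]
      push_cast
      ring
    -- zeros accumulate at 0
    have hzero : ∀ t : ℝ, |t| * ‖d‖ < ε → Φ (t : ℂ) = 0 := by
      intro t ht
      rw [hreal t]
      apply hvan
      apply hball
      rw [mem_ball]
      calc dist (w₀ + t • d) w₀ = ‖t • d‖ := by
            rw [dist_eq_norm]; congr 1; abel
        _ = |t| * ‖d‖ := by rw [norm_smul, Real.norm_eq_abs]
        _ < ε := ht
    by_cases hd0 : d = 0
    · have hww : w = w₀ := sub_eq_zero.mp (by rw [← hd]; exact hd0)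
      rw [hww]; exact hvan w₀ hw₀
    · have hfreq : ∃ᶠ z in nhdsWithin (0 : ℂ) {(0:ℂ)}ᶜ, Φ z = 0 := by
        rw [Filter.frequently_iff]
        intro s hs
        obtain ⟨r, rpos, hr⟩ := Metric.mem_nhdsWithin_iff.1 hs
        set t : ℝ := min (r / 2) (ε / (‖d‖ + 1)) with htdef
        have hdpos : 0 < ‖d‖ := norm_pos_iff.2 hd0
        have htpos : 0 < t := lt_min (by linarith) (by positivity)
        refine ⟨(t : ℂ), hr ⟨?_, ?_⟩, hzero t ?_⟩
        · rw [mem_ball, dist_zero_right, Complex.norm_real, Real.norm_eq_abs,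
            abs_of_pos htpos]
          exact lt_of_le_of_lt (min_le_left _ _) (by linarith)
        · simp only [Set.mem_compl_iff, Set.mem_singleton_iff]
          exact_mod_cast htpos.ne'
        · rw [abs_of_pos htpos]
          calc t * ‖d‖ ≤ (ε / (‖d‖ + 1)) * ‖d‖ := by
                apply mul_le_mul_of_nonneg_right (min_le_right _ _) hdpos.le
            _ < ε := by
                rw [div_mul_eq_mul_div, div_lt_iff₀ (by positivity)]
                nlinarith
      have hEq : Set.EqOn Φ 0 Set.univ :=
        hΦan.eqOn_zero_of_preconnected_of_frequently_eq_zero isPreconnected_univ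
          (Set.mem_univ 0) hfreq
      have := hEq (Set.mem_univ (1 : ℂ))
      have h1 : Φ ((1:ℝ) : ℂ) = 0 := by simpa using this
      rw [hreal 1] at h1
      simpa [hd] using h1
  -- Step B : the (Mathlib-normalized) Fourier transform vanishes everywhere
  have keyFT : ∀ w : EuclideanSpace ℝ (Fin n), 𝓕 f w = 0 := by
    intro w
    have : 𝓕 f w = euclideanFourier f ((2 * π) • w) := by
      rw [Real.fourier_eq', euclideanFourier]
      apply integral_congr_ae
      filter_upwards with x
      rw [smul_eq_mul]
      congr 1
      rw [real_inner_smul_right]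
      push_cast
      ring
    rw [this, key]
  -- Step C : conclude f = 0 a.e. by testing against smooth compactly supported functions
  apply ae_eq_zero_of_integral_contDiff_smul_eq_zero hf.locallyIntegrable
  intro g hg hgsupp
  have hgc_smooth : ContDiff ℝ ((⊤:ℕ∞)) fun x : EuclideanSpace ℝ (Fin n) => (g x : ℂ) :=
    Complex.ofRealCLM.contDiff.comp hg
  have hgc_supp : HasCompactSupport fun x : EuclideanSpace ℝ (Fin n) => (g x : ℂ) :=
    hgsupp.comp_left (g := fun t : ℝ => (t : ℂ)) Complex.ofReal_zero
  set G : SchwartzMap (EuclideanSpace ℝ (Fin n)) ℂ := toSchwartzAux _ hgc_smooth hgc_supp with hG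
  set h : SchwartzMap (EuclideanSpace ℝ (Fin n)) ℂ :=
    (fourierCLE ℂ (SchwartzMap (EuclideanSpace ℝ (Fin n)) ℂ)).symm G with hh
  have hFh : 𝓕 (⇑h) = ⇑G := by
    have h1 : ⇑(fourierCLE ℂ (SchwartzMap (EuclideanSpace ℝ (Fin n)) ℂ) h) = 𝓕 (⇑h) :=
      SchwartzMap.fourier_coe h
    rw [← h1, hh, (fourierCLE ℂ (SchwartzMap (EuclideanSpace ℝ (Fin n)) ℂ)).apply_symm_apply G]
  have flip := VectorFourier.integral_fourierIntegral_smul_eq_flip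
    (μ := (volume : Measure (EuclideanSpace ℝ (Fin n))))
    (ν := (volume : Measure (EuclideanSpace ℝ (Fin n))))
    (L := innerₗ (EuclideanSpace ℝ (Fin n))) Real.continuous_fourierChar continuous_inner
    hf h.integrable
  have hflipL : (innerₗ (EuclideanSpace ℝ (Fin n))).flip = innerₗ (EuclideanSpace ℝ (Fin n)) := by
    apply LinearMap.ext; intro x; apply LinearMap.ext; intro y
    show (inner ℝ y x : ℝ) = (inner ℝ x y : ℝ)
    exact real_inner_comm x y
  rw [hflipL] at flip
  have hLHS : (∫ ξ, (VectorFourier.fourierIntegral Real.fourierChar volume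
      (innerₗ (EuclideanSpace ℝ (Fin n))) f ξ) • (⇑h) ξ) = 0 := by
    have : ∀ ξ, VectorFourier.fourierIntegral Real.fourierChar volume
        (innerₗ (EuclideanSpace ℝ (Fin n))) f ξ = 0 := keyFT
    simp [this]
  rw [hLHS] at flip
  have hRHS : (∫ x, f x • VectorFourier.fourierIntegral Real.fourierChar volume
      (innerₗ (EuclideanSpace ℝ (Fin n))) (⇑h) x) = ∫ x, g x • f x := by
    apply integral_congr_ae
    filter_upwards with x
    have : VectorFourier.fourierIntegral Real.fourierChar volume
        (innerₗ (EuclideanSpace ℝ (Fin n))) (⇑h) x = (g x : ℂ) := by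
      have := congrFun hFh x
      exact this
    rw [this, smul_eq_mul, Complex.real_smul, mul_comm]
  rw [hRHS] at flip
  exact flip.symm
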